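/- Let (Ω, F, P) be a probability space, T ∈ ℕ, and let ρ*_t : Ω → ℝ^L_{++} and c*_t : Ω → ℝ^L_+ \ {0}, t ∈ {0,…,T}, be random vectors. Let Λ ⊆ ℝ^{T+1}_{++} and Δ ⊆ (0,1]^{T+1} be given sets. Then the following are equivalent: (i) there exist a map u : Ω × ℝ^L_+ → ℝ such that for P-almost every ω the function u(ω, ·) is concave, locally nonsatiated, and continuous, and random vectors (λ_t)_{t=0}^{T} with values in Λ and (δ_t)_{t=0}^{T} with values in Δ, such that P-almost surely, for every t there exists a supergradient ξ_t ∈ ∂u(ω, ·)(c*_t) with δ_t ξ_{t,j} ≤ λ_t ρ*_{t,j} for every coordinate j, with equality whenever c*_{t,j} ≠ 0; (ii) there exist random vectors (v_t)_{t=0}^{T} with positive entries, (λ_t)_{t=0}^{T} with values in Λ, and (δ_t)_{t=0}^{T} with values in Δ such that P-almost surely v_t − v_s ≥ (λ_t/δ_t) ρ*_tᵀ (c*_t − c*_s) for all s, t ∈ {0,…,T}. -/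

import Mathlib

open MeasureTheory Filter Topology Finset

noncomputable section

/-- Vectors in ℝ^L with the Euclidean norm. -/
abbrev Vec (L : ℕ) := EuclideanSpace ℝ (Fin L)

/-- Inner product (dot product) of two vectors. -/
def dotp {L : ℕ} (p c : Vec L) : ℝ := ∑ j, p j * c j

/-- Componentwise nonnegative vectors: the set ℝ^L_+. -/
def NonnegV {L : ℕ} (c : Vec L) : Prop := ∀ j, 0 ≤ c j

/-- The consumption space ℝ^L_+ \ {0}. -/
def ConsV {L : ℕ} (c : Vec L) : Prop := NonnegV c ∧ c ≠ 0

/-- Componentwise strictly positive vectors: the set ℝ^L_{++}. -/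
def PosV {L : ℕ} (p : Vec L) : Prop := ∀ j, 0 < p j

/-- Concavity of u on its domain ℝ^L_+. -/
def IsConcaveNN {L : ℕ} (u : Vec L → ℝ) : Prop :=
  ∀ c c' : Vec L, NonnegV c → NonnegV c' → ∀ a : ℝ, 0 ≤ a → a ≤ 1 →
    a * u c + (1 - a) * u c' ≤ u (a • c + (1 - a) • c')

/-- Local nonsatiation of u on its domain ℝ^L_+. -/
def LocallyNonsatiatedNN {L : ℕ} (u : Vec L → ℝ) : Prop :=
  ∀ c : Vec L, NonnegV c → ∀ ε : ℝ, 0 < ε →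
    ∃ c' : Vec L, NonnegV c' ∧ ‖c' - c‖ < ε ∧ u c < u c'

/-- Continuity of u on its domain ℝ^L_+. -/
def ContinuousNN {L : ℕ} (u : Vec L → ℝ) : Prop := ContinuousOn u {c | NonnegV c}

/-- A concave, locally nonsatiated, continuous utility function on ℝ^L_+. -/
def NiceUtility {L : ℕ} (u : Vec L → ℝ) : Prop :=
  IsConcaveNN u ∧ LocallyNonsatiatedNN u ∧ ContinuousNN u

/-- ξ is a supergradient of u at c: u(c') − u(c) ≤ ξᵀ(c'−c) for all c' ∈ ℝ^L_+ \ {0}. -/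
def Supergrad {L : ℕ} (u : Vec L → ℝ) (c ξ : Vec L) : Prop :=
  ∀ c' : Vec L, ConsV c' → u c' - u c ≤ dotp ξ (c' - c)

/- Auxiliary lemmas about `dotp`. -/

lemma dotp_sub {L : ℕ} (p x y : Vec L) : dotp p (x - y) = dotp p x - dotp p y := by
  simp [dotp, PiLp.sub_apply, mul_sub, Finset.sum_sub_distrib]

lemma dotp_add {L : ℕ} (p x y : Vec L) : dotp p (x + y) = dotp p x + dotp p y := by
  simp [dotp, PiLp.add_apply, mul_add, Finset.sum_add_distrib]

lemma dotp_smul_left {L : ℕ} (a : ℝ) (p x : Vec L) : dotp (a • p) x = a * dotp p x := by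
  simp [dotp, PiLp.smul_apply, Finset.mul_sum, mul_assoc]

lemma dotp_smul_right {L : ℕ} (a : ℝ) (p x : Vec L) : dotp p (a • x) = a * dotp p x := by
  simp only [dotp, PiLp.smul_apply, smul_eq_mul, Finset.mul_sum]
  exact Finset.sum_congr rfl fun j _ => by ring

lemma dotp_single {L : ℕ} (p : Vec L) (j0 : Fin L) (a : ℝ) :
    dotp p (EuclideanSpace.single j0 a) = p j0 * a := by
  simp [dotp, EuclideanSpace.single_apply, mul_ite, Finset.sum_ite_eq']

lemma dotp_affine {L : ℕ} (p x y z : Vec L) (a : ℝ) :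
    dotp p (a • x + (1 - a) • y - z) = a * dotp p (x - z) + (1 - a) * dotp p (y - z) := by
  simp only [dotp, Finset.mul_sum, ← Finset.sum_add_distrib]
  refine Finset.sum_congr rfl fun j _ => ?_
  simp only [PiLp.sub_apply, PiLp.add_apply, PiLp.smul_apply, smul_eq_mul]
  ring

lemma cont_dotp {L : ℕ} (p z : Vec L) : Continuous fun c : Vec L => dotp p (c - z) := by
  unfold dotp
  refine continuous_finset_sum _ fun j _ => ?_
  exact continuous_const.mul
    (((EuclideanSpace.proj j : Vec L →L[ℝ] ℝ).continuous).sub continuous_const)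


/-- equivalence between s/m-rationalizability of a random array
(ρ*_t, c*_t)_{t=0}^{T} (first-order conditions with random utility, marginal utilities of
income with values in Λ and discount rates with values in Δ) and the existence of positive
random vectors (v_t) satisfying the Afriat-type inequalities almost surely. -/
theorem stmt_7 {L T : ℕ} {Ω : Type*} [MeasurableSpace Ω] (P : Measure Ω)
    [IsProbabilityMeasure P]
    (ρs cs : Fin (T + 1) → Ω → Vec L)
    (hρmeas : ∀ t, Measurable (ρs t)) (hcmeas : ∀ t, Measurable (cs t))
    (hρ : ∀ t ω, PosV (ρs t ω)) (hc : ∀ t ω, ConsV (cs t ω))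
    (Λ : Set (Fin (T + 1) → ℝ)) (hΛ : ∀ l ∈ Λ, ∀ t, 0 < l t)
    (Δ : Set (Fin (T + 1) → ℝ)) (hΔ : ∀ δ ∈ Δ, ∀ t, 0 < δ t ∧ δ t ≤ 1) :
    (∃ (u : Ω → Vec L → ℝ) (lam del : Ω → Fin (T + 1) → ℝ),
        (∀ ω, lam ω ∈ Λ) ∧ (∀ ω, del ω ∈ Δ) ∧
        (∀ᵐ ω ∂P, NiceUtility (u ω)) ∧
        (∀ᵐ ω ∂P, ∀ t, ∃ ξ : Vec L, Supergrad (u ω) (cs t ω) ξ ∧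
            (∀ j, del ω t * ξ j ≤ lam ω t * ρs t ω j) ∧
            (∀ j, cs t ω j ≠ 0 → del ω t * ξ j = lam ω t * ρs t ω j)))
    ↔ (∃ v lam del : Ω → Fin (T + 1) → ℝ,
        (∀ ω t, 0 < v ω t) ∧ (∀ ω, lam ω ∈ Λ) ∧ (∀ ω, del ω ∈ Δ) ∧
        (∀ᵐ ω ∂P, ∀ s t,
          v ω t - v ω s ≥ (lam ω t / del ω t) * dotp (ρs t ω) (cs t ω - cs s ω))) := by
  constructor
  · -- (i) → (ii)
    rintro ⟨u, lam, del, hlam, hdel, _hnice, hfoc⟩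
    refine ⟨fun ω t => u ω (cs t ω) + (1 + ∑ s, |u ω (cs s ω)|), lam, del, ?_, hlam, hdel, ?_⟩
    · intro ω t
      have h1 : |u ω (cs t ω)| ≤ ∑ s, |u ω (cs s ω)| :=
        Finset.single_le_sum (f := fun s => |u ω (cs s ω)|)
          (fun s _ => abs_nonneg _) (Finset.mem_univ t)
      have h2 := neg_abs_le (u ω (cs t ω))
      dsimp only
      linarith
    · filter_upwards [hfoc] with ω hω s t
      obtain ⟨ξ, hsg, hle, heq⟩ := hω t
      have hδ : 0 < del ω t := (hΔ _ (hdel ω) t).1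
      have h1 : u ω (cs s ω) - u ω (cs t ω) ≤ dotp ξ (cs s ω) - dotp ξ (cs t ω) := by
        have h := hsg (cs s ω) (hc s ω)
        rwa [dotp_sub] at h
      have h2 : dotp ξ (cs t ω) = (lam ω t / del ω t) * dotp (ρs t ω) (cs t ω) := by
        unfold dotp
        rw [Finset.mul_sum]
        refine Finset.sum_congr rfl fun j _ => ?_
        by_cases hj : cs t ω j = 0
        · simp [hj]
        · have hξ : ξ j = lam ω t / del ω t * ρs t ω j := by
            have h := heq j hj
            field_simp
            linarith
          rw [hξ]; ring
      have h3 : dotp ξ (cs s ω) ≤ (lam ω t / del ω t) * dotp (ρs t ω) (cs s ω) := by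
        unfold dotp
        rw [Finset.mul_sum]
        refine Finset.sum_le_sum fun j _ => ?_
        have hξ : ξ j ≤ lam ω t / del ω t * ρs t ω j := by
          rw [div_mul_eq_mul_div, le_div_iff₀ hδ]
          linarith [hle j, mul_comm (ξ j) (del ω t)]
        have := (hc s ω).1 j
        nlinarith
      have hsub : dotp (ρs t ω) (cs t ω - cs s ω)
          = dotp (ρs t ω) (cs t ω) - dotp (ρs t ω) (cs s ω) := dotp_sub _ _ _
      have e1 := mul_sub (lam ω t / del ω t) (dotp (ρs t ω) (cs t ω)) (dotp (ρs t ω) (cs s ω))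
      rw [ge_iff_le, hsub]
      linarith
  · -- (ii) → (i)
    rintro ⟨v, lam, del, hv, hlam, hdel, hAf⟩
    have hΩ : Nonempty Ω := by
      by_contra h
      rw [not_nonempty_iff] at h
      have h1 : P Set.univ = 1 := measure_univ
      rw [Set.univ_eq_empty_iff.mpr h] at h1
      simp at h1
    have hL : 0 < L := by
      rcases Nat.eq_zero_or_pos L with h0 | h
      · exfalso
        obtain ⟨ω⟩ := hΩ
        refine (hc 0 ω).2 ?_
        subst h0
        exact PiLp.ext fun j => Fin.elim0 j
      · exact h
    have hApos : ∀ ω t, 0 < lam ω t / del ω t := fun ω t =>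
      div_pos (hΛ _ (hlam ω) t) (hΔ _ (hdel ω) t).1
    set f : Ω → Fin (T + 1) → Vec L → ℝ :=
      fun ω t c => v ω t + (lam ω t / del ω t) * dotp (ρs t ω) (c - cs t ω) with hf
    set u : Ω → Vec L → ℝ :=
      fun ω c => Finset.univ.inf' Finset.univ_nonempty (fun t => f ω t c) with hu
    refine ⟨u, lam, del, hlam, hdel, ?_, ?_⟩
    · -- NiceUtility holds for every ω
      refine ae_of_all _ fun ω => ⟨?_, ?_, ?_⟩
      · -- concavity
        intro c c' _ _ a ha0 ha1
        refine Finset.le_inf' _ _ fun t _ => ?_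
        have h1 : u ω c ≤ f ω t c := Finset.inf'_le _ (Finset.mem_univ t)
        have h2 : u ω c' ≤ f ω t c' := Finset.inf'_le _ (Finset.mem_univ t)
        have key : f ω t (a • c + (1 - a) • c') = a * f ω t c + (1 - a) * f ω t c' := by
          simp only [hf]
          rw [dotp_affine]
          ring
        rw [key]
        have m1 := mul_le_mul_of_nonneg_left h1 ha0
        have m2 := mul_le_mul_of_nonneg_left h2 (by linarith : (0:ℝ) ≤ 1 - a)
        linarith
      · -- local nonsatiation
        intro c hcnn ε hε
        set j0 : Fin L := ⟨0, hL⟩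
        set e : Vec L := EuclideanSpace.single j0 (1 : ℝ) with he
        set η : ℝ := ε / 2 with hη
        have hη0 : 0 < η := by positivity
        refine ⟨c + η • e, ?_, ?_, ?_⟩
        · intro j
          have hje : 0 ≤ e j := by
            rw [he, EuclideanSpace.single_apply]
            split <;> norm_num
          have : (c + η • e) j = c j + η * e j := by
            rw [PiLp.add_apply, PiLp.smul_apply, smul_eq_mul]
          rw [this]
          exact add_nonneg (hcnn j) (mul_nonneg hη0.le hje)
        · rw [add_sub_cancel_left, norm_smul, he, EuclideanSpace.norm_single]
          simp only [norm_one, mul_one, Real.norm_eq_abs, abs_of_pos hη0]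
          linarith
        · obtain ⟨t0, _, ht0⟩ :=
            Finset.exists_mem_eq_inf' (Finset.univ_nonempty) (fun t => f ω t (c + η • e))
          have hd : dotp (ρs t0 ω) (c + η • e - cs t0 ω)
              = dotp (ρs t0 ω) (c - cs t0 ω) + η * ρs t0 ω j0 := by
            rw [add_sub_right_comm, dotp_add, dotp_smul_right, he, dotp_single]
            ring
          have hlt : f ω t0 c < f ω t0 (c + η • e) := by
            simp only [hf]
            rw [hd]
            have hpos : 0 < (lam ω t0 / del ω t0) * (η * ρs t0 ω j0) :=
              mul_pos (hApos ω t0) (mul_pos hη0 (hρ t0 ω j0))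
            nlinarith
          have h1 : u ω c ≤ f ω t0 c := Finset.inf'_le _ (Finset.mem_univ t0)
          have h2 : u ω (c + η • e) = f ω t0 (c + η • e) := ht0
          rw [h2]
          exact lt_of_le_of_lt h1 hlt
      · -- continuity
        refine ContinuousOn.finset_inf'_apply Finset.univ_nonempty fun t _ => ?_
        exact (continuous_const.add (continuous_const.mul (cont_dotp _ _))).continuousOn
    · -- first-order conditions a.s.
      filter_upwards [hAf] with ω hω t
      have hδ : 0 < del ω t := (hΔ _ (hdel ω) t).1
      have heq : ∀ j, del ω t * ((lam ω t / del ω t) • ρs t ω) j = lam ω t * ρs t ω j := by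
        intro j
        rw [PiLp.smul_apply, smul_eq_mul]
        field_simp
      refine ⟨(lam ω t / del ω t) • ρs t ω, ?_, fun j => le_of_eq (heq j), fun j _ => heq j⟩
      intro c' hc'
      have hub : u ω c' ≤ f ω t c' := Finset.inf'_le _ (Finset.mem_univ t)
      have hlb : u ω (cs t ω) = v ω t := by
        apply le_antisymm
        · have h := Finset.inf'_le (b := t) (fun s => f ω s (cs t ω)) (Finset.mem_univ t)
          have hz : dotp (ρs t ω) (cs t ω - cs t ω) = 0 := by
            rw [sub_self]
            simp [dotp, PiLp.zero_apply]
          simp only [hf, hz, mul_zero, add_zero] at h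
          exact h
        · refine Finset.le_inf' _ _ fun s _ => ?_
          have h := hω t s
          have hd1 : dotp (ρs s ω) (cs s ω - cs t ω)
              = dotp (ρs s ω) (cs s ω) - dotp (ρs s ω) (cs t ω) := dotp_sub _ _ _
          have hd2 : dotp (ρs s ω) (cs t ω - cs s ω)
              = dotp (ρs s ω) (cs t ω) - dotp (ρs s ω) (cs s ω) := dotp_sub _ _ _
          have e1 := mul_sub (lam ω s / del ω s) (dotp (ρs s ω) (cs s ω))
            (dotp (ρs s ω) (cs t ω))
          have e2 := mul_sub (lam ω s / del ω s) (dotp (ρs s ω) (cs t ω))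
            (dotp (ρs s ω) (cs s ω))
          rw [ge_iff_le, hd1] at h
          simp only [hf]
          rw [hd2]
          linarith
      rw [hlb, dotp_smul_left]
      simp only [hf] at hub
      linarith

end
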